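/- In the PN space (ℝ, ν, τ_π, τ_M) with ν_p(t) = t/(t+|p|), a subset A ⊆ ℝ is D-bounded if and only if A is bounded in the usual sense (sup{|p| : p ∈ A} < ∞). -/

import Mathlib

open Filter

/-- ν_p(t) = t/(t+|p|) for t > 0, ν_p(0) = 0, on ℝ. -/
noncomputable def nuR (p : ℝ) (t : ℝ) : ℝ :=
  if 0 < t then t / (t + |p|) else 0

lemma nuR_nonneg (p t : ℝ) : 0 ≤ nuR p t := by
  unfold nuR
  split
  · positivity
  · exact le_refl 0

lemma tendsto_aux (M : ℝ) (hM : 0 ≤ M) :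
    Tendsto (fun x : ℝ => x / (x + M)) atTop (nhds 1) := by
  have h : Tendsto (fun x : ℝ => 1 - M / (x + M)) atTop (nhds 1) := by
    have h0 : Tendsto (fun x : ℝ => M / (x + M)) atTop (nhds 0) :=
      Tendsto.div_atTop tendsto_const_nhds (tendsto_atTop_add_const_right _ _ tendsto_id)
    simpa using tendsto_const_nhds.sub h0
  refine h.congr' ?_
  filter_upwards [eventually_gt_atTop 0] with x hx
  have hx0 : x + M ≠ 0 := by positivity
  field_simp
  ring

/-- in the PN space (ℝ, ν, τ_π, τ_M) with ν_p(t) = t/(t+|p|), a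
nonempty subset A is D-bounded iff it is bounded in the usual sense. -/
theorem stmt19 (A : Set ℝ) (hA : A.Nonempty) :
    Tendsto (fun x : ℝ => sInf ((fun p => nuR p x) '' A)) atTop (nhds 1)
      ↔ ∃ M : ℝ, ∀ p ∈ A, |p| ≤ M := by
  constructor
  · intro h
    by_contra hb
    push_neg at hb
    have hf : ∀ x : ℝ, sInf ((fun p => nuR p x) '' A) = 0 := by
      intro x
      have hbdd : BddBelow ((fun p => nuR p x) '' A) := by
        refine ⟨0, ?_⟩
        rintro y ⟨p, _, rfl⟩
        exact nuR_nonneg p x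
      have hne : ((fun p => nuR p x) '' A).Nonempty := hA.image _
      refine le_antisymm ?_ (le_csInf hne (by rintro y ⟨p, _, rfl⟩; exact nuR_nonneg p x))
      by_cases hx : 0 < x
      · -- show sInf ≤ ε for all ε > 0
        refine le_of_forall_pos_le_add fun ε hε => ?_
        obtain ⟨p, hpA, hp⟩ := hb (x / ε)
        have hple : nuR p x ≤ ε := by
          unfold nuR
          rw [if_pos hx]
          rw [div_le_iff₀ (by positivity)]
          have hx2 : x < |p| * ε := (div_lt_iff₀ hε).mp hp
          nlinarith [mul_pos hε hx]
        calc sInf ((fun p => nuR p x) '' A) ≤ nuR p x := csInf_le hbdd ⟨p, hpA, rfl⟩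
          _ ≤ ε := hple
          _ ≤ 0 + ε := by linarith
      · have : ∀ y ∈ ((fun p => nuR p x) '' A), y = 0 := by
          rintro y ⟨p, _, rfl⟩
          simp [nuR, hx]
        obtain ⟨p, hpA⟩ := hA
        calc sInf ((fun p => nuR p x) '' A) ≤ nuR p x := csInf_le hbdd ⟨p, hpA, rfl⟩
          _ = 0 := this _ ⟨p, hpA, rfl⟩
    have h0 : Tendsto (fun x : ℝ => sInf ((fun p => nuR p x) '' A)) atTop (nhds 0) := by
      simp only [hf]; exact tendsto_const_nhds
    exact one_ne_zero (tendsto_nhds_unique h h0)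
  · rintro ⟨M, hM⟩
    obtain ⟨q, hqA⟩ := hA
    have hM0 : 0 ≤ M := le_trans (abs_nonneg q) (hM q hqA)
    refine tendsto_of_tendsto_of_tendsto_of_le_of_le' (tendsto_aux M hM0)
      tendsto_const_nhds ?_ ?_
    · filter_upwards [eventually_gt_atTop 0] with x hx
      refine le_csInf ((Set.nonempty_of_mem hqA).image _) ?_
      rintro y ⟨p, hpA, rfl⟩
      simp only [nuR, if_pos hx]
      apply div_le_div_of_nonneg_left hx.le (by positivity)
      have := hM p hpA
      linarith
    · filter_upwards [eventually_gt_atTop 0] with x hx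
      have hbdd : BddBelow ((fun p => nuR p x) '' A) := by
        refine ⟨0, ?_⟩
        rintro y ⟨p, _, rfl⟩
        exact nuR_nonneg p x
      calc sInf ((fun p => nuR p x) '' A) ≤ nuR q x := csInf_le hbdd ⟨q, hqA, rfl⟩
        _ ≤ 1 := by
            simp only [nuR, if_pos hx]
            rw [div_le_one (by positivity)]
            linarith [abs_nonneg q]
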